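/- Let p, q be positive integers and set a = 2(p+q)n / ((p+q)² + 1). Then the (p,q)-sum-free set S = {(x,y) ∈ {1,...,n}² : a < x + y < (p+q)·a} satisfies |S| ≥ (1 − 2/((p+q)²+1))·n² − C·n for some absolute constant C (independent of n, p, q may appear in C). -/

import Mathlib

open scoped Classical
open Finset

private lemma tri_nat (m : ℕ) :
    ((range m ×ˢ range m).filter (fun z => z.1 + z.2 < m)).card * 2 = m * m + m := by
  have hset : (range m ×ˢ range m).filter (fun z => z.1 + z.2 < m)
      = (range m).biUnion (fun k => Finset.HasAntidiagonal.antidiagonal k) := by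
    ext z
    simp only [mem_filter, mem_product, mem_range, mem_biUnion, Finset.HasAntidiagonal.mem_antidiagonal]
    constructor
    · rintro ⟨⟨h1, h2⟩, h3⟩
      exact ⟨z.1 + z.2, h3, rfl⟩
    · rintro ⟨k, hk, hz⟩
      omega
  rw [hset, Finset.card_biUnion]
  · have h1 : ∀ k ∈ range m, (Finset.HasAntidiagonal.antidiagonal k).card = k + 1 :=
      fun k _ => Nat.card_antidiagonal k
    rw [Finset.sum_congr rfl h1, Finset.sum_add_distrib, Finset.sum_const, card_range,
      smul_eq_mul, mul_one]
    have h2 := Finset.sum_range_id_mul_two m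
    rcases m with _ | k
    · simp
    · simp only [Nat.succ_sub_one] at h2
      nlinarith [h2]
  · intro x hx y hy hxy
    rw [Function.onFun, Finset.disjoint_left]
    intro z hz hz'
    rw [Finset.HasAntidiagonal.mem_antidiagonal] at hz hz'
    exact hxy (hz ▸ hz')

private lemma low_bound (n : ℤ) (hn : 1 ≤ n) (a : ℝ) (ha : 0 ≤ a) :
    2 * (((Finset.Icc 1 n ×ˢ Finset.Icc 1 n).filter
      (fun z : ℤ × ℤ => (z.1 : ℝ) + (z.2 : ℝ) ≤ a)).card : ℝ) ≤ a ^ 2 := by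
  set A : ℤ := ⌊a⌋ with hA
  set m : ℕ := (A - 1).toNat with hm
  have hinj : ((Finset.Icc 1 n ×ˢ Finset.Icc 1 n).filter
      (fun z : ℤ × ℤ => (z.1 : ℝ) + (z.2 : ℝ) ≤ a)).card ≤
      ((range m ×ˢ range m).filter (fun z => z.1 + z.2 < m)).card := by
    apply Finset.card_le_card_of_injOn (fun z => ((z.1 - 1).toNat, (z.2 - 1).toNat))
    · intro z hz
      simp only [Finset.mem_coe, Finset.mem_filter, Finset.mem_product, Finset.mem_Icc] at hz
      obtain ⟨⟨⟨hz11, hz12⟩, hz21, hz22⟩, hza⟩ := hz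
      have hzA : z.1 + z.2 ≤ A := by
        rw [hA]
        exact Int.le_floor.mpr (by push_cast; exact hza)
      simp only [Finset.mem_coe, Finset.mem_filter, Finset.mem_product, Finset.mem_range]
      omega
    · intro z hz w hw h
      simp only [Finset.mem_coe, Finset.mem_filter, Finset.mem_product, Finset.mem_Icc] at hz hw
      have h1 : ((z.1 - 1).toNat, (z.2 - 1).toNat) = ((w.1 - 1).toNat, (w.2 - 1).toNat) := h
      rw [Prod.mk.injEq] at h1
      rw [Prod.ext_iff]
      constructor <;> omega
  have htri := tri_nat m
  have h2 : ((Finset.Icc 1 n ×ˢ Finset.Icc 1 n).filter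
      (fun z : ℤ × ℤ => (z.1 : ℝ) + (z.2 : ℝ) ≤ a)).card * 2 ≤ m * m + m := by
    omega
  have h3 : 2 * (((Finset.Icc 1 n ×ˢ Finset.Icc 1 n).filter
      (fun z : ℤ × ℤ => (z.1 : ℝ) + (z.2 : ℝ) ≤ a)).card : ℝ) ≤ (m : ℝ) * m + m := by
    exact_mod_cast Nat.mul_comm _ 2 ▸ h2
  have hb : (m : ℝ) * m + (m : ℝ) ≤ a ^ 2 := by
    rcases le_or_gt A 1 with h | h
    · have hm0 : m = 0 := by omega
      rw [hm0]
      push_cast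
      nlinarith [sq_nonneg a]
    · have hmA : (m : ℝ) = (A : ℝ) - 1 := by
        have h' : ((A - 1).toNat : ℤ) = A - 1 := Int.toNat_of_nonneg (by omega)
        rw [hm, ← Int.cast_natCast (R := ℝ), h']
        push_cast
        ring
      have hAa : (A : ℝ) ≤ a := Int.floor_le a
      have h2A : (2:ℝ) ≤ (A : ℝ) := by exact_mod_cast h
      rw [hmA]
      nlinarith [mul_le_mul_of_nonneg_left hAa (by linarith : (0:ℝ) ≤ (A:ℝ)),
        mul_le_mul_of_nonneg_right hAa ha]
  linarith

private lemma up_bound (n : ℤ) (hn : 1 ≤ n) (b : ℝ) (hb : (n : ℝ) ≤ b) :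
    2 * (((Finset.Icc 1 n ×ˢ Finset.Icc 1 n).filter
      (fun z : ℤ × ℤ => b ≤ (z.1 : ℝ) + (z.2 : ℝ))).card : ℝ) ≤
      (2 * (n : ℝ) - b) ^ 2 + 5 * (n : ℝ) := by
  have hn' : (1:ℝ) ≤ (n:ℝ) := by exact_mod_cast hn
  set B : ℤ := 2 * n - ⌈b⌉ with hB
  set m : ℕ := (B + 1).toNat with hm
  have hinj : ((Finset.Icc 1 n ×ˢ Finset.Icc 1 n).filter
      (fun z : ℤ × ℤ => b ≤ (z.1 : ℝ) + (z.2 : ℝ))).card ≤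
      ((range m ×ˢ range m).filter (fun z => z.1 + z.2 < m)).card := by
    apply Finset.card_le_card_of_injOn (fun z => ((n - z.1).toNat, (n - z.2).toNat))
    · intro z hz
      simp only [Finset.mem_coe, Finset.mem_filter, Finset.mem_product, Finset.mem_Icc] at hz
      obtain ⟨⟨⟨hz11, hz12⟩, hz21, hz22⟩, hza⟩ := hz
      have hzB : 2 * n - z.1 - z.2 ≤ B := by
        have : ⌈b⌉ ≤ z.1 + z.2 := Int.ceil_le.mpr (by push_cast; exact hza)
        omega
      simp only [Finset.mem_coe, Finset.mem_filter, Finset.mem_product, Finset.mem_range]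
      omega
    · intro z hz w hw h
      simp only [Finset.mem_coe, Finset.mem_filter, Finset.mem_product, Finset.mem_Icc] at hz hw
      have h1 : ((n - z.1).toNat, (n - z.2).toNat) = ((n - w.1).toNat, (n - w.2).toNat) := h
      rw [Prod.mk.injEq] at h1
      rw [Prod.ext_iff]
      constructor <;> omega
  have htri := tri_nat m
  have h2 : ((Finset.Icc 1 n ×ˢ Finset.Icc 1 n).filter
      (fun z : ℤ × ℤ => b ≤ (z.1 : ℝ) + (z.2 : ℝ))).card * 2 ≤ m * m + m := by
    omega
  have h3 : 2 * (((Finset.Icc 1 n ×ˢ Finset.Icc 1 n).filter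
      (fun z : ℤ × ℤ => b ≤ (z.1 : ℝ) + (z.2 : ℝ))).card : ℝ) ≤ (m : ℝ) * m + m := by
    exact_mod_cast Nat.mul_comm _ 2 ▸ h2
  have hbound : (m : ℝ) * m + (m : ℝ) ≤ (2 * (n : ℝ) - b) ^ 2 + 5 * (n : ℝ) := by
    rcases le_or_gt (B + 1) 0 with h | h
    · have hm0 : m = 0 := by omega
      rw [hm0]
      push_cast
      nlinarith [sq_nonneg (2 * (n:ℝ) - b)]
    · have hmB : (m : ℝ) = (B : ℝ) + 1 := by
        have h' : ((B + 1).toNat : ℤ) = B + 1 := Int.toNat_of_nonneg (by omega)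
        rw [hm, ← Int.cast_natCast (R := ℝ), h']
        push_cast
        ring
      have hBr : (B : ℝ) ≤ 2 * (n : ℝ) - b := by
        have h1 : b ≤ (⌈b⌉ : ℝ) := Int.le_ceil b
        have h2' : (B : ℝ) = 2 * (n : ℝ) - (⌈b⌉ : ℝ) := by rw [hB]; push_cast; ring
        linarith
      have hB0 : (0:ℝ) ≤ (B : ℝ) := by exact_mod_cast (by omega : (0:ℤ) ≤ B)
      have hrn : 2 * (n : ℝ) - b ≤ (n : ℝ) := by linarith
      have hmr : (m : ℝ) ≤ (2 * (n : ℝ) - b) + 1 := by rw [hmB]; linarith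
      have h0m : (0:ℝ) ≤ (m : ℝ) := by positivity
      nlinarith [mul_self_le_mul_self h0m hmr]
  linarith

private lemma split_card (n : ℤ) (a b : ℝ) (hab : a < b) :
    ((Finset.Icc 1 n ×ˢ Finset.Icc 1 n).filter
        (fun z : ℤ × ℤ => a < (z.1 : ℝ) + (z.2 : ℝ) ∧ (z.1 : ℝ) + (z.2 : ℝ) < b)).card
      + (((Finset.Icc 1 n ×ˢ Finset.Icc 1 n).filter
          (fun z : ℤ × ℤ => (z.1 : ℝ) + (z.2 : ℝ) ≤ a)).card
        + ((Finset.Icc 1 n ×ˢ Finset.Icc 1 n).filter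
          (fun z : ℤ × ℤ => b ≤ (z.1 : ℝ) + (z.2 : ℝ))).card)
      = (Finset.Icc 1 n ×ˢ Finset.Icc 1 n).card := by
  have h1 := Finset.card_filter_add_card_filter_not
    (s := Finset.Icc 1 n ×ˢ Finset.Icc 1 n)
    (p := fun z : ℤ × ℤ => a < (z.1 : ℝ) + (z.2 : ℝ) ∧ (z.1 : ℝ) + (z.2 : ℝ) < b)
  have hdisj : Disjoint
      ((Finset.Icc 1 n ×ˢ Finset.Icc 1 n).filter (fun z : ℤ × ℤ => (z.1 : ℝ) + (z.2 : ℝ) ≤ a))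
      ((Finset.Icc 1 n ×ˢ Finset.Icc 1 n).filter (fun z : ℤ × ℤ => b ≤ (z.1 : ℝ) + (z.2 : ℝ))) := by
    rw [Finset.disjoint_left]
    rintro z hz hz'
    simp only [Finset.mem_filter] at hz hz'
    linarith [hz.2, hz'.2]
  have h2 : (Finset.Icc 1 n ×ˢ Finset.Icc 1 n).filter
      (fun z : ℤ × ℤ => ¬(a < (z.1 : ℝ) + (z.2 : ℝ) ∧ (z.1 : ℝ) + (z.2 : ℝ) < b))
      = ((Finset.Icc 1 n ×ˢ Finset.Icc 1 n).filter (fun z : ℤ × ℤ => (z.1 : ℝ) + (z.2 : ℝ) ≤ a))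
        ∪ ((Finset.Icc 1 n ×ˢ Finset.Icc 1 n).filter (fun z : ℤ × ℤ => b ≤ (z.1 : ℝ) + (z.2 : ℝ))) := by
    ext z
    simp only [Finset.mem_filter, Finset.mem_union, not_and, not_lt]
    constructor
    · rintro ⟨hz, h⟩
      rcases le_or_gt ((z.1 : ℝ) + (z.2 : ℝ)) a with h' | h'
      · exact Or.inl ⟨hz, h'⟩
      · exact Or.inr ⟨hz, h h'⟩
    · rintro (⟨hz, h⟩ | ⟨hz, h⟩)
      · exact ⟨hz, fun h' => absurd h' (not_lt.mpr h)⟩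
      · exact ⟨hz, fun _ => h⟩
  rw [← h1, h2, Finset.card_union_of_disjoint hdisj]

private lemma aux (p q : ℕ) (hp : 0 < p) (hq : 0 < q) (n : ℤ) (hn : 1 ≤ n) :
    (¬ ∃ u ∈ (Finset.Icc 1 n ×ˢ Finset.Icc 1 n).filter
        (fun z : ℤ × ℤ => 2 * ((p : ℝ) + q) * (n : ℝ) / (((p : ℝ) + q) ^ 2 + 1) < (z.1 : ℝ) + (z.2 : ℝ) ∧
          (z.1 : ℝ) + (z.2 : ℝ) < (p + q : ℝ) * (2 * ((p : ℝ) + q) * (n : ℝ) / (((p : ℝ) + q) ^ 2 + 1))),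
      ∃ v ∈ (Finset.Icc 1 n ×ˢ Finset.Icc 1 n).filter
        (fun z : ℤ × ℤ => 2 * ((p : ℝ) + q) * (n : ℝ) / (((p : ℝ) + q) ^ 2 + 1) < (z.1 : ℝ) + (z.2 : ℝ) ∧
          (z.1 : ℝ) + (z.2 : ℝ) < (p + q : ℝ) * (2 * ((p : ℝ) + q) * (n : ℝ) / (((p : ℝ) + q) ^ 2 + 1))),
      ∃ w ∈ (Finset.Icc 1 n ×ˢ Finset.Icc 1 n).filter
        (fun z : ℤ × ℤ => 2 * ((p : ℝ) + q) * (n : ℝ) / (((p : ℝ) + q) ^ 2 + 1) < (z.1 : ℝ) + (z.2 : ℝ) ∧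
          (z.1 : ℝ) + (z.2 : ℝ) < (p + q : ℝ) * (2 * ((p : ℝ) + q) * (n : ℝ) / (((p : ℝ) + q) ^ 2 + 1))),
      (p : ℤ) • u + (q : ℤ) • v = w) ∧
    (1 - 2 / (((p : ℝ) + q) ^ 2 + 1)) * (n : ℝ) ^ 2 - 10 * (n : ℝ) ≤
      (((Finset.Icc 1 n ×ˢ Finset.Icc 1 n).filter
        (fun z : ℤ × ℤ => 2 * ((p : ℝ) + q) * (n : ℝ) / (((p : ℝ) + q) ^ 2 + 1) < (z.1 : ℝ) + (z.2 : ℝ) ∧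
          (z.1 : ℝ) + (z.2 : ℝ) < (p + q : ℝ) * (2 * ((p : ℝ) + q) * (n : ℝ) / (((p : ℝ) + q) ^ 2 + 1)))).card : ℝ) := by
  set s : ℝ := (p : ℝ) + q with hs_def
  have hp1 : (1:ℝ) ≤ p := by exact_mod_cast hp
  have hq1 : (1:ℝ) ≤ q := by exact_mod_cast hq
  have hs : 2 ≤ s := by rw [hs_def]; linarith
  have hd : (0:ℝ) < s ^ 2 + 1 := by positivity
  set d : ℝ := s ^ 2 + 1 with hd_def
  set a : ℝ := 2 * s * (n : ℝ) / d with ha_def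
  have hn' : (1:ℝ) ≤ (n:ℝ) := by exact_mod_cast hn
  have ha_pos : 0 < a := by rw [ha_def]; positivity
  clear_value s d a
  constructor
  · rintro ⟨u, hu, v, hv, w, hw, heq⟩
    simp only [mem_filter, mem_product] at hu hv hw
    obtain ⟨-, hu1, hu2⟩ := hu
    obtain ⟨-, hv1, hv2⟩ := hv
    obtain ⟨-, hw1, hw2⟩ := hw
    have h1 : (p : ℤ) * u.1 + (q : ℤ) * v.1 = w.1 := congrArg Prod.fst heq
    have h2 : (p : ℤ) * u.2 + (q : ℤ) * v.2 = w.2 := congrArg Prod.snd heq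
    have hr : (p : ℝ) * ((u.1 : ℝ) + u.2) + (q : ℝ) * ((v.1 : ℝ) + v.2) = (w.1 : ℝ) + w.2 := by
      have h1' : ((p : ℤ) * u.1 + (q : ℤ) * v.1 : ℝ) = (w.1 : ℝ) := by
        exact_mod_cast congrArg (Int.cast : ℤ → ℝ) h1
      have h2' : ((p : ℤ) * u.2 + (q : ℤ) * v.2 : ℝ) = (w.2 : ℝ) := by
        exact_mod_cast congrArg (Int.cast : ℤ → ℝ) h2
      push_cast at h1' h2'
      linarith
    have hsum : s * a < (w.1 : ℝ) + w.2 := by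
      calc s * a = (p : ℝ) * a + (q : ℝ) * a := by rw [hs_def]; ring
      _ < (p : ℝ) * ((u.1 : ℝ) + u.2) + (q : ℝ) * ((v.1 : ℝ) + v.2) := by
          have := mul_lt_mul_of_pos_left hu1 (by linarith : (0:ℝ) < (p:ℝ))
          have := mul_lt_mul_of_pos_left hv1 (by linarith : (0:ℝ) < (q:ℝ))
          linarith
      _ = (w.1 : ℝ) + w.2 := hr
    linarith [hsum, hw2]
  · have hab : a < s * a := by nlinarith
    have hsplit := split_card n a (s * a) hab
    have hlow := low_bound n hn a ha_pos.le
    have hna : (n : ℝ) ≤ s * a := by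
      have h2 : s * (2 * s * (n:ℝ) / d) = 2 * s ^ 2 * (n:ℝ) / d := by ring
      rw [ha_def, h2, le_div_iff₀ (by rw [hd_def]; positivity)]
      rw [hd_def]
      nlinarith [mul_nonneg (by nlinarith : (0:ℝ) ≤ s ^ 2 - 1) (by linarith : (0:ℝ) ≤ (n:ℝ))]
    have hup := up_bound n hn (s * a) hna
    have hkey : a ^ 2 + (2 * (n : ℝ) - s * a) ^ 2 = 4 * (n : ℝ) ^ 2 / d := by
      rw [ha_def, hd_def]
      field_simp
      ring
    have hsq : ((Finset.Icc 1 n ×ˢ Finset.Icc 1 n).card : ℝ) = (n : ℝ) ^ 2 := by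
      have h' : ((n + 1 - 1).toNat : ℝ) = (n : ℝ) := by
        exact_mod_cast congrArg (Int.cast : ℤ → ℝ)
          (show ((n + 1 - 1).toNat : ℤ) = n from Int.toNat_of_nonneg (by omega) |>.trans (by ring))
      rw [Finset.card_product, Int.card_Icc, Nat.cast_mul, h']
      ring
    have hsplit' : (((Finset.Icc 1 n ×ˢ Finset.Icc 1 n).filter
          (fun z : ℤ × ℤ => a < (z.1 : ℝ) + (z.2 : ℝ) ∧ (z.1 : ℝ) + (z.2 : ℝ) < s * a)).card : ℝ)
        + ((((Finset.Icc 1 n ×ˢ Finset.Icc 1 n).filter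
            (fun z : ℤ × ℤ => (z.1 : ℝ) + (z.2 : ℝ) ≤ a)).card : ℝ)
          + (((Finset.Icc 1 n ×ˢ Finset.Icc 1 n).filter
            (fun z : ℤ × ℤ => s * a ≤ (z.1 : ℝ) + (z.2 : ℝ))).card : ℝ))
        = (n : ℝ) ^ 2 := by
      rw [← hsq]
      exact_mod_cast hsplit
    have hgoal : (1 - 2 / d) * (n : ℝ) ^ 2 = (n : ℝ) ^ 2 - (4 * (n : ℝ) ^ 2 / d) / 2 := by
      ring
    rw [hgoal]
    nlinarith [hsplit', hlow, hup, hkey, hn']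


theorem stmt_10 (p q : ℕ) (hp : 0 < p) (hq : 0 < q) :
    ∃ C : ℝ, ∀ n : ℤ, 1 ≤ n →
    let a : ℝ := 2 * ((p : ℝ) + q) * (n : ℝ) / (((p : ℝ) + q) ^ 2 + 1)
    let S : Finset (ℤ × ℤ) :=
      (Finset.Icc 1 n ×ˢ Finset.Icc 1 n).filter
        (fun z => a < (z.1 : ℝ) + (z.2 : ℝ) ∧ (z.1 : ℝ) + (z.2 : ℝ) < (p + q : ℝ) * a)
    (¬ ∃ u ∈ S, ∃ v ∈ S, ∃ w ∈ S, (p : ℤ) • u + (q : ℤ) • v = w) ∧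
    (1 - 2 / (((p : ℝ) + q) ^ 2 + 1)) * (n : ℝ) ^ 2 - C * (n : ℝ) ≤ (S.card : ℝ) := by
  exact ⟨10, fun n hn => aux p q hp hq n hn⟩
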